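/- Davis–Kahan sin θ bound for the leading eigenvector: let A, B be real symmetric p × p matrices with unit leading eigenvectors u, v corresponding to largest eigenvalues α₁ and β₁, and suppose the eigengap δ = α₁ − α₂ > 0 of A satisfies ‖A − B‖ < δ/2. Then sin∠(u, v) ≤ 2‖A − B‖/δ, where sin²∠(u,v) = 1 − ⟨u,v⟩². -/

import Mathlib

open Matrix
open scoped RealInnerProductSpace

/-- The spectral (ℓ²→ℓ² operator) norm of a real square matrix. -/
noncomputable def specNorm {p : ℕ} (M : Matrix (Fin p) (Fin p) ℝ) : ℝ :=
  ‖LinearMap.toContinuousLinearMap (Matrix.toEuclideanLin M)‖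

lemma dk_aux_eig {p : ℕ} {A : Matrix (Fin p) (Fin p) ℝ} (hA : A.IsHermitian) (k : Fin p) :
    Matrix.toEuclideanLin A (hA.eigenvectorBasis k) = hA.eigenvalues k • hA.eigenvectorBasis k := by
  have h := hA.mulVec_eigenvectorBasis k
  ext i
  have := congrFun h i
  simpa [Matrix.toEuclideanLin_apply] using this

lemma dk_aux_opnorm {p : ℕ} (M : Matrix (Fin p) (Fin p) ℝ) (x : EuclideanSpace ℝ (Fin p)) :
    ‖Matrix.toEuclideanLin M x‖ ≤ specNorm M * ‖x‖ := by
  have h := (LinearMap.toContinuousLinearMap (Matrix.toEuclideanLin M)).le_opNorm x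
  have h2 : (LinearMap.toContinuousLinearMap (Matrix.toEuclideanLin M)) x
      = Matrix.toEuclideanLin M x :=
    congrFun (LinearMap.coe_toContinuousLinearMap' _) x
  rw [h2] at h
  exact h

lemma dk_aux_rayleigh {p : ℕ} [NeZero p] {B : Matrix (Fin p) (Fin p) ℝ} (hB : B.IsHermitian)
    (x : EuclideanSpace ℝ (Fin p)) (hx : ‖x‖ = 1) :
    ⟪x, Matrix.toEuclideanLin B x⟫ ≤ ⨆ i, hB.eigenvalues i := by
  set g := hB.eigenvectorBasis
  set ν := hB.eigenvalues
  have hle : ∀ i, ν i ≤ ⨆ i, ν i := fun i =>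
    le_ciSup (Set.Finite.bddAbove (Set.finite_range ν)) i
  have hsum : ∑ i, ⟪x, g i⟫ * ⟪g i, Matrix.toEuclideanLin B x⟫
      = ⟪x, Matrix.toEuclideanLin B x⟫ := g.sum_inner_mul_inner _ _
  have hsym : (Matrix.toEuclideanLin B).IsSymmetric := Matrix.isHermitian_iff_isSymmetric.1 hB
  have hterm : ∀ i, ⟪x, g i⟫ * ⟪g i, Matrix.toEuclideanLin B x⟫
      = ν i * ⟪x, g i⟫ ^ 2 := by
    intro i
    have h1 : ⟪g i, Matrix.toEuclideanLin B x⟫ = ν i * ⟪g i, x⟫ := by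
      rw [← hsym (g i) x, dk_aux_eig hB i, real_inner_smul_left]
    rw [h1, real_inner_comm (g i) x]; ring
  have hone : ∑ i, ⟪x, g i⟫ ^ 2 = 1 := by
    have h3 := g.sum_inner_mul_inner x x
    have h2 : ⟪x, x⟫ = 1 := by
      rw [real_inner_self_eq_norm_sq, hx]; norm_num
    calc ∑ i, ⟪x, g i⟫ ^ 2 = ∑ i, ⟪x, g i⟫ * ⟪g i, x⟫ := by
          refine Finset.sum_congr rfl fun i _ => ?_
          rw [real_inner_comm (g i) x]; ring
      _ = 1 := by rw [h3, h2]
  calc ⟪x, Matrix.toEuclideanLin B x⟫ = ∑ i, ν i * ⟪x, g i⟫ ^ 2 := by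
        rw [← hsum]; exact Finset.sum_congr rfl fun i _ => hterm i
    _ ≤ ∑ i, (⨆ i, ν i) * ⟪x, g i⟫ ^ 2 := by
        refine Finset.sum_le_sum fun i _ => ?_
        exact mul_le_mul_of_nonneg_right (hle i) (sq_nonneg _)
    _ = ⨆ i, ν i := by rw [← Finset.mul_sum, hone, mul_one]

set_option maxHeartbeats 1000000 in
theorem davis_kahan_leading_eigenvector {p : ℕ} (hp : 2 ≤ p)
    (A B : Matrix (Fin p) (Fin p) ℝ)
    (hA : A.IsHermitian) (hB : B.IsHermitian)
    (α : Fin p → ℝ) (hαdec : Antitone α)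
    (hα : ∃ e : Equiv.Perm (Fin p), α = hA.eigenvalues ∘ e)
    (β₁ : ℝ) (hβ₁ : β₁ = ⨆ i, hB.eigenvalues i)
    (u v : EuclideanSpace ℝ (Fin p)) (hu : ‖u‖ = 1) (hv : ‖v‖ = 1)
    (huA : Matrix.toEuclideanLin A u = α ⟨0, by omega⟩ • u)
    (hvB : Matrix.toEuclideanLin B v = β₁ • v)
    (δ : ℝ) (hδ : δ = α ⟨0, by omega⟩ - α ⟨1, by omega⟩) (hδpos : 0 < δ)
    (hpert : specNorm (A - B) < δ / 2) :
    Real.sqrt (1 - (inner ℝ u v : ℝ)^2) ≤ 2 * specNorm (A - B) / δ := by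
  obtain ⟨e, hαe⟩ := hα
  haveI : NeZero p := ⟨by omega⟩
  obtain ⟨ε, hε⟩ : ∃ x : ℝ, x = specNorm (A - B) := ⟨_, rfl⟩
  rw [← hε] at hpert ⊢
  have hεnn : 0 ≤ ε := hε ▸ norm_nonneg _
  set f := hA.eigenvectorBasis with hf
  set μ := hA.eigenvalues with hμ
  have hsymA : (Matrix.toEuclideanLin A).IsSymmetric := Matrix.isHermitian_iff_isSymmetric.1 hA
  set z0 : Fin p := ⟨0, by omega⟩ with hz0
  set z1 : Fin p := ⟨1, by omega⟩ with hz1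
  set j : Fin p := e z0 with hj
  set α₀ := α z0 with hα₀
  have hμj : μ j = α₀ := by rw [hα₀, hαe]; rfl
  -- spectral gap below the top eigenvalue
  have hgap : ∀ k, k ≠ j → μ k ≤ α₀ - δ := by
    intro k hk
    have hik : e (e.symm k) = k := e.apply_symm_apply k
    have hi : e.symm k ≠ z0 := by
      intro h; exact hk (by rw [← hik, h, hj])
    have h1 : z1 ≤ e.symm k := by
      rw [Fin.le_def]
      have h2 : (e.symm k).val ≠ 0 := fun h => hi (Fin.ext h)
      simpa [hz1] using by omega
    have h2 : α (e.symm k) ≤ α z1 := hαdec h1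
    have h3 : μ k = α (e.symm k) := by rw [hαe]; simp [Function.comp, hik]
    have h4 : α z1 = α₀ - δ := by rw [hδ, hα₀]; ring
    linarith
  have hsub : ∀ x : EuclideanSpace ℝ (Fin p), Matrix.toEuclideanLin (A - B) x
      = Matrix.toEuclideanLin A x - Matrix.toEuclideanLin B x := by
    intro x; rw [map_sub, LinearMap.sub_apply]
  -- Weyl-type bound: β₁ ≥ α₀ - ε
  have huu : ⟪u, u⟫ = 1 := by rw [real_inner_self_eq_norm_sq, hu]; norm_num
  have hAu : ⟪u, Matrix.toEuclideanLin A u⟫ = α₀ := by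
    rw [huA, real_inner_smul_right, huu, mul_one]
  have hEu : |⟪u, Matrix.toEuclideanLin (A - B) u⟫| ≤ ε := by
    calc |⟪u, Matrix.toEuclideanLin (A - B) u⟫|
        ≤ ‖u‖ * ‖Matrix.toEuclideanLin (A - B) u‖ := abs_real_inner_le_norm _ _
      _ ≤ ε := by
          rw [hu, one_mul, hε]
          simpa [hu] using dk_aux_opnorm (A - B) u
  have hBu : α₀ - ε ≤ ⟪u, Matrix.toEuclideanLin B u⟫ := by
    have h1 : ⟪u, Matrix.toEuclideanLin A u⟫ - ⟪u, Matrix.toEuclideanLin B u⟫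
        = ⟪u, Matrix.toEuclideanLin (A - B) u⟫ := by
      rw [hsub, inner_sub_right]
    have h2 := abs_le.1 hEu
    rw [hAu] at h1
    linarith [h2.1, h2.2]
  have hβ : α₀ - ε ≤ β₁ := by
    rw [hβ₁]
    exact le_trans hBu (dk_aux_rayleigh hB u hu)
  have hβμ : ∀ k, k ≠ j → δ - ε ≤ β₁ - μ k := by
    intro k hk; have := hgap k hk; linarith
  have hδε : δ / 2 ≤ δ - ε := by linarith
  -- coordinates of v in the eigenbasis of A
  set c : Fin p → ℝ := fun k => ⟪f k, v⟫ with hc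
  obtain ⟨r, hr⟩ : ∃ x : EuclideanSpace ℝ (Fin p), x = Matrix.toEuclideanLin (A - B) v :=
    ⟨_, rfl⟩
  have hrnorm : ‖r‖ ≤ ε := by
    have := dk_aux_opnorm (A - B) v
    rw [hv, mul_one] at this
    rw [hr, hε]
    exact this
  have hrk : ∀ k, ⟪f k, r⟫ = (μ k - β₁) * c k := by
    intro k
    rw [hr, hsub, hvB, inner_sub_right, real_inner_smul_right, ← hsymA (f k) v,
      dk_aux_eig hA k, real_inner_smul_left]
    ring
  have hsumr : ∑ k, ((μ k - β₁) * c k) ^ 2 = ‖r‖ ^ 2 := by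
    have h3 := f.sum_inner_mul_inner r r
    calc ∑ k, ((μ k - β₁) * c k) ^ 2 = ∑ k, ⟪r, f k⟫ * ⟪f k, r⟫ := by
          refine Finset.sum_congr rfl fun k _ => ?_
          rw [real_inner_comm (f k) r, hrk k]; ring
      _ = ⟪r, r⟫ := h3
      _ = ‖r‖ ^ 2 := real_inner_self_eq_norm_sq r
  have hsumv : ∑ k, c k ^ 2 = 1 := by
    have h3 := f.sum_inner_mul_inner v v
    have h2 : ⟪v, v⟫ = 1 := by rw [real_inner_self_eq_norm_sq, hv]; norm_num
    calc ∑ k, c k ^ 2 = ∑ k, ⟪v, f k⟫ * ⟪f k, v⟫ := by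
          refine Finset.sum_congr rfl fun k _ => ?_
          rw [hc, real_inner_comm (f k) v]; ring
      _ = 1 := by rw [h3, h2]
  -- u is (up to sign) the j-th eigenvector
  have hfu : ∀ k, k ≠ j → ⟪f k, u⟫ = 0 := by
    intro k hk
    have h1 : μ k * ⟪f k, u⟫ = α₀ * ⟪f k, u⟫ := by
      rw [← real_inner_smul_left, ← dk_aux_eig hA k, hsymA (f k) u, huA,
        real_inner_smul_right]
    have h2 : μ k - α₀ ≠ 0 := by have := hgap k hk; intro h; rw [sub_eq_zero] at h; linarith
    have h3 : (μ k - α₀) * ⟪f k, u⟫ = 0 := by rw [sub_mul, h1, sub_self]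
    rcases mul_eq_zero.1 h3 with h | h
    · exact absurd h h2
    · exact h
  have hjuv : ⟪u, v⟫ ^ 2 = c j ^ 2 := by
    have huv : ⟪u, v⟫ = ⟪u, f j⟫ * c j := by
      have h3 := f.sum_inner_mul_inner u v
      rw [← h3]
      refine Finset.sum_eq_single j (fun k _ hk => ?_) (fun h => absurd (Finset.mem_univ j) h)
      rw [real_inner_comm (f k) u, hfu k hk, zero_mul]
    have hu1 : ⟪u, f j⟫ ^ 2 = 1 := by
      have h3 := f.sum_inner_mul_inner u u
      have h4 : ∑ k, ⟪u, f k⟫ * ⟪f k, u⟫ = ⟪u, f j⟫ * ⟪f j, u⟫ :=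
        Finset.sum_eq_single j (fun k _ hk => by rw [hfu k hk, mul_zero])
          (fun h => absurd (Finset.mem_univ j) h)
      rw [h4, huu] at h3
      have h5 : ⟪f j, u⟫ = ⟪u, f j⟫ := real_inner_comm u (f j)
      rw [h5] at h3
      rw [sq]; exact h3
    rw [huv, mul_pow, hu1, one_mul]
  have hSnn : 0 ≤ 1 - ⟪u, v⟫ ^ 2 := by
    have h1 : ∑ k ∈ Finset.univ.erase j, c k ^ 2 + c j ^ 2 = ∑ k, c k ^ 2 :=
      Finset.sum_erase_add _ _ (Finset.mem_univ j)
    have h2 : (0:ℝ) ≤ ∑ k ∈ Finset.univ.erase j, c k ^ 2 :=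
      Finset.sum_nonneg fun k _ => sq_nonneg _
    rw [hjuv]; linarith [hsumv]
  have hS : ∑ k ∈ Finset.univ.erase j, c k ^ 2 = 1 - ⟪u, v⟫ ^ 2 := by
    have h1 : ∑ k ∈ Finset.univ.erase j, c k ^ 2 + c j ^ 2 = ∑ k, c k ^ 2 :=
      Finset.sum_erase_add _ _ (Finset.mem_univ j)
    rw [hjuv]; linarith [hsumv]
  -- main estimate
  have hlower : (δ - ε) ^ 2 * (1 - ⟪u, v⟫ ^ 2) ≤ ε ^ 2 := by
    have h1 : ∑ k ∈ Finset.univ.erase j, ((μ k - β₁) * c k) ^ 2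
        ≤ ∑ k, ((μ k - β₁) * c k) ^ 2 :=
      Finset.sum_le_sum_of_subset_of_nonneg (Finset.subset_univ _)
        (fun k _ _ => sq_nonneg _)
    have h2 : ∀ k ∈ Finset.univ.erase j, (δ - ε) ^ 2 * c k ^ 2 ≤ ((μ k - β₁) * c k) ^ 2 := by
      intro k hk
      have hkj := Finset.ne_of_mem_erase hk
      have h3 := hβμ k hkj
      have h4 : 0 ≤ δ - ε := by linarith
      have h5 : (δ - ε) ^ 2 ≤ (β₁ - μ k) ^ 2 := by nlinarith
      have h6 : ((μ k - β₁) * c k) ^ 2 = (β₁ - μ k) ^ 2 * c k ^ 2 := by ring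
      rw [h6]
      exact mul_le_mul_of_nonneg_right h5 (sq_nonneg _)
    calc (δ - ε) ^ 2 * (1 - ⟪u, v⟫ ^ 2)
        = ∑ k ∈ Finset.univ.erase j, (δ - ε) ^ 2 * c k ^ 2 := by
          rw [← Finset.mul_sum, hS]
      _ ≤ ∑ k ∈ Finset.univ.erase j, ((μ k - β₁) * c k) ^ 2 := Finset.sum_le_sum h2
      _ ≤ ∑ k, ((μ k - β₁) * c k) ^ 2 := h1
      _ = ‖r‖ ^ 2 := hsumr
      _ ≤ ε ^ 2 := pow_le_pow_left₀ (norm_nonneg r) hrnorm 2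
  have hgoal2 : 1 - ⟪u, v⟫ ^ 2 ≤ (2 * ε / δ) ^ 2 := by
    rw [div_pow, le_div_iff₀ (pow_pos hδpos 2)]
    have h5 : (δ / 2) ^ 2 ≤ (δ - ε) ^ 2 := pow_le_pow_left₀ (by linarith) hδε 2
    have h6 : (1 - ⟪u, v⟫ ^ 2) * (δ / 2) ^ 2 ≤ (1 - ⟪u, v⟫ ^ 2) * (δ - ε) ^ 2 :=
      mul_le_mul_of_nonneg_left h5 hSnn
    have h8 : (1 - ⟪u, v⟫ ^ 2) * (δ - ε) ^ 2 ≤ ε ^ 2 := by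
      rw [mul_comm]; exact hlower
    have h7 : (1 - ⟪u, v⟫ ^ 2) * δ ^ 2 = 4 * ((1 - ⟪u, v⟫ ^ 2) * (δ / 2) ^ 2) := by ring
    have h9 : (2 * ε) ^ 2 = 4 * ε ^ 2 := by ring
    linarith [h6, h7, h8, h9]
  calc Real.sqrt (1 - ⟪u, v⟫ ^ 2) ≤ Real.sqrt ((2 * ε / δ) ^ 2) := Real.sqrt_le_sqrt hgoal2
    _ = 2 * ε / δ := Real.sqrt_sq (div_nonneg (by linarith) hδpos.le)
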